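/- arXiv:2408.09718 — 2 statements merged into one kernel-verified Lean document; each statement's English description precedes it below -/
import Mathlib

section
/- Let n ~ N(0, I_d), let x_0, ..., x_{L-1} ∈ R^d span a subspace S of R^d, and let V_ℓ = { v : ⟨v, x_ℓ⟩ ≥ max_{k≠ℓ} ⟨v, x_k⟩ }. Then the vector E[n · 1{n ∈ V_ℓ}] lies in S, i.e., is a linear combination of x_0, ..., x_{L-1}. -/
open MeasureTheory ProbabilityTheory Real Filter

/-- The standard Gaussian measure on `Fin d → ℝ`. -/
noncomputable def stdGaussian (d : ℕ) : Measure (Fin d → ℝ) :=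
  Measure.pi (fun _ => gaussianReal 0 1)

instance (d : ℕ) : IsProbabilityMeasure (stdGaussian d) := by
  unfold _root_.stdGaussian; infer_instance

section AuxLemmas

open Set
open scoped ENNReal

lemma aux_lintegral_pi_prod {n : ℕ} (f : Fin n → ℝ → ℝ≥0∞) (hf : ∀ i, Measurable (f i)) :
    ∫⁻ v : Fin n → ℝ, ∏ i, f i (v i) ∂(Measure.pi fun _ => (volume : Measure ℝ)) =
      ∏ i, ∫⁻ y, f i y := by
  induction n with
  | zero => simp [Measure.pi_of_empty]
  | succ n ih =>
    have h := (measurePreserving_piFinSuccAbove (fun _ : Fin (n+1) => (volume : Measure ℝ)) 0).symm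
    have hmeas : Measurable fun v : Fin (n+1) → ℝ => ∏ i, f i (v i) :=
      Finset.measurable_prod _ fun i _ => (hf i).comp (measurable_pi_apply i)
    rw [← h.lintegral_comp hmeas]
    simp_rw [MeasurableEquiv.piFinSuccAbove_symm_apply, Fin.insertNthEquiv,
      Equiv.coe_fn_mk, Fin.insertNth_zero]
    simp only [Fin.prod_univ_succ, Fin.cons_zero, Fin.cons_succ, Fin.zero_succAbove, cast_eq]
    rw [lintegral_prod_mul (f := f 0) (g := fun y : Fin n → ℝ => ∏ x : Fin n, f x.succ (y x))
      ((hf 0).aemeasurable)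
      (Finset.measurable_prod _ fun i _ => (hf i.succ).comp (measurable_pi_apply i)).aemeasurable]
    rw [ih (fun i => f i.succ) (fun i => hf i.succ)]

lemma aux_pi_withDensity {d : ℕ} (f : ℝ → ℝ≥0∞) (hf : Measurable f)
    [SigmaFinite ((volume : Measure ℝ).withDensity f)] :
    Measure.pi (fun _ : Fin d => (volume : Measure ℝ).withDensity f) =
      (volume : Measure (Fin d → ℝ)).withDensity (fun v => ∏ i, f (v i)) := by
  refine Measure.pi_eq fun s hs => ?_
  rw [withDensity_apply _ (MeasurableSet.univ_pi hs)]
  have h1 : ∫⁻ v in Set.pi univ s, ∏ i, f (v i) ∂(volume : Measure (Fin d → ℝ)) =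
      ∫⁻ v, ∏ i, (s i).indicator f (v i) ∂(volume : Measure (Fin d → ℝ)) := by
    rw [← lintegral_indicator (MeasurableSet.univ_pi hs)]
    congr 1; ext v
    by_cases hv : v ∈ Set.pi univ s
    · rw [indicator_of_mem hv]
      exact Finset.prod_congr rfl fun i _ => (indicator_of_mem (hv i trivial) f).symm
    · rw [indicator_of_notMem hv]
      rw [Set.mem_univ_pi] at hv
      push_neg at hv
      obtain ⟨i, hi⟩ := hv
      exact (Finset.prod_eq_zero (Finset.mem_univ i) (indicator_of_notMem hi f)).symm
  rw [h1, volume_pi, aux_lintegral_pi_prod _ (fun i => hf.indicator (hs i))]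
  exact Finset.prod_congr rfl fun i _ =>
    by rw [lintegral_indicator (hs i), withDensity_apply _ (hs i)]

lemma stdGaussian_eq_withDensity (d : ℕ) :
    Measure.pi (fun _ : Fin d => gaussianReal 0 1) =
      (volume : Measure (Fin d → ℝ)).withDensity
        (fun v => ∏ i, ProbabilityTheory.gaussianPDF 0 1 (v i)) := by
  have h : (volume : Measure ℝ).withDensity (ProbabilityTheory.gaussianPDF 0 1) =
      gaussianReal 0 1 := (ProbabilityTheory.gaussianReal_of_var_ne_zero 0 one_ne_zero).symm
  haveI : SigmaFinite ((volume : Measure ℝ).withDensity (ProbabilityTheory.gaussianPDF 0 1)) := by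
    rw [h]; infer_instance
  rw [← aux_pi_withDensity _ (ProbabilityTheory.measurable_gaussianPDF 0 1)]
  exact congrArg Measure.pi (funext fun _ => h.symm)

noncomputable def reflMap {d : ℕ} (u : EuclideanSpace ℝ (Fin d)) : (Fin d → ℝ) ≃ᵐ (Fin d → ℝ) :=
  (MeasurableEquiv.toLp 2 (Fin d → ℝ)).symm.symm.trans
    ((((Submodule.reflection ((ℝ ∙ u)ᗮ)).toHomeomorph.toMeasurableEquiv).trans
      (MeasurableEquiv.toLp 2 (Fin d → ℝ)).symm))

lemma reflMap_apply {d : ℕ} (u : EuclideanSpace ℝ (Fin d)) (v : Fin d → ℝ) (i : Fin d) :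
    reflMap u v i = v i - (2 * (∑ j, u j * v j) / (∑ j, u j * u j)) * u i := by
  have hw : reflMap u v = (WithLp.equiv 2 (Fin d → ℝ))
      (Submodule.reflection ((ℝ ∙ u)ᗮ) ((WithLp.equiv 2 (Fin d → ℝ)).symm v)) := rfl
  set w : EuclideanSpace ℝ (Fin d) := (WithLp.equiv 2 (Fin d → ℝ)).symm v with hwdef
  have hrefl : Submodule.reflection ((ℝ ∙ u)ᗮ) w
      = w - (2 * (inner ℝ u w : ℝ) / (‖u‖ ^ 2)) • u := by
    rw [Submodule.reflection_apply, Submodule.starProjection_orthogonal_val,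
      Submodule.starProjection_singleton]
    rw [two_smul]
    simp only [RCLike.ofReal_real_eq_id, id_eq]
    module
  have hinner : (inner ℝ u w : ℝ) = ∑ j, u j * v j := by
    simp [PiLp.inner_apply, RCLike.inner_apply, conj_trivial, mul_comm, hwdef, WithLp.equiv_symm_apply, PiLp.toLp_apply]
  have hnorm : (‖u‖ : ℝ) ^ 2 = ∑ j, u j * u j := by
    rw [← real_inner_self_eq_norm_sq]
    simp only [PiLp.inner_apply, RCLike.inner_apply, conj_trivial]
  rw [hw, hrefl]
  simp only [WithLp.equiv_apply, PiLp.sub_apply, PiLp.smul_apply, smul_eq_mul]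
  rw [hinner, hnorm, hwdef]
  simp [WithLp.equiv_symm_apply, PiLp.toLp_apply]

lemma reflMap_sq_sum {d : ℕ} (u : EuclideanSpace ℝ (Fin d)) (v : Fin d → ℝ) :
    ∑ i, (reflMap u v i) ^ 2 = ∑ i, (v i) ^ 2 := by
  have hw : reflMap u v = (WithLp.equiv 2 (Fin d → ℝ))
      (Submodule.reflection ((ℝ ∙ u)ᗮ) ((WithLp.equiv 2 (Fin d → ℝ)).symm v)) := rfl
  set w : EuclideanSpace ℝ (Fin d) := (WithLp.equiv 2 (Fin d → ℝ)).symm v with hwdef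
  have h1 : ∑ i, (reflMap u v i) ^ 2
      = (inner ℝ (Submodule.reflection ((ℝ ∙ u)ᗮ) w) (Submodule.reflection ((ℝ ∙ u)ᗮ) w) : ℝ) := by
    simp only [hw, PiLp.inner_apply, RCLike.inner_apply, conj_trivial,
      WithLp.equiv_apply, sq]
  have h2 : (inner ℝ w w : ℝ) = ∑ i, (v i) ^ 2 := by
    simp only [hwdef, PiLp.inner_apply, RCLike.inner_apply, conj_trivial,
      WithLp.equiv_symm_apply, PiLp.toLp_apply, sq]
  rw [h1, LinearIsometryEquiv.inner_map_map, h2]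

lemma reflMap_measurePreserving {d : ℕ} (u : EuclideanSpace ℝ (Fin d)) :
    MeasurePreserving (reflMap u) (volume : Measure (Fin d → ℝ)) volume :=
  (EuclideanSpace.volume_preserving_symm_measurableEquiv_toLp (Fin d)).comp
    (((Submodule.reflection ((ℝ ∙ u)ᗮ)).measurePreserving).comp
      (EuclideanSpace.volume_preserving_symm_measurableEquiv_toLp (Fin d)).symm)

lemma prod_gaussianPDFReal_eq {d : ℕ} (v w : Fin d → ℝ)
    (h : ∑ i, (v i) ^ 2 = ∑ i, (w i) ^ 2) :
    ∏ i, gaussianPDFReal 0 1 (v i) = ∏ i, gaussianPDFReal 0 1 (w i) := by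
  have key : ∀ z : Fin d → ℝ, ∏ i, gaussianPDFReal 0 1 (z i)
      = (√(2 * π * 1))⁻¹ ^ d * Real.exp (-(∑ i, (z i) ^ 2) / 2) := by
    intro z
    simp only [gaussianPDFReal, NNReal.coe_one, sub_zero, mul_one]
    rw [Finset.prod_mul_distrib, Finset.prod_const, Finset.card_univ, Fintype.card_fin,
      ← Real.exp_sum]
    congr 1
    rw [← Finset.sum_div, Finset.sum_neg_distrib, neg_div]
  rw [key, key, h]

lemma prod_gaussianPDF_eq {d : ℕ} (v w : Fin d → ℝ)
    (h : ∑ i, (v i) ^ 2 = ∑ i, (w i) ^ 2) :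
    ∏ i, gaussianPDF 0 1 (v i) = ∏ i, gaussianPDF 0 1 (w i) := by
  simp only [gaussianPDF]
  rw [← ENNReal.ofReal_prod_of_nonneg (fun i _ => gaussianPDFReal_nonneg 0 1 (v i)),
    ← ENNReal.ofReal_prod_of_nonneg (fun i _ => gaussianPDFReal_nonneg 0 1 (w i)),
    prod_gaussianPDFReal_eq v w h]

lemma map_withDensity_invariant {α : Type*} [MeasurableSpace α] (μ : Measure α) (T : α ≃ᵐ α)
    (hT : MeasurePreserving T μ μ) (G : α → ℝ≥0∞) (hG : Measurable G)
    (hGT : ∀ a, G (T a) = G a) :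
    MeasurePreserving T (μ.withDensity G) (μ.withDensity G) := by
  refine ⟨T.measurable, ?_⟩
  ext s hs
  rw [Measure.map_apply T.measurable hs, withDensity_apply _ hs,
    withDensity_apply _ (hs.preimage T.measurable)]
  calc ∫⁻ a in T ⁻¹' s, G a ∂μ = ∫⁻ a in T ⁻¹' s, G (T a) ∂μ := by
        refine setLIntegral_congr_fun (hs.preimage T.measurable) ?_
        intro a _; exact (hGT a).symm
    _ = ∫⁻ b in s, G b ∂(Measure.map T μ) := (setLIntegral_map hs hG T.measurable).symm
    _ = ∫⁻ b in s, G b ∂μ := by rw [hT.map_eq]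

lemma reflMap_measurePreserving_stdGaussian {d : ℕ} (u : EuclideanSpace ℝ (Fin d)) :
    MeasurePreserving (reflMap u) (stdGaussian d) (stdGaussian d) := by
  unfold _root_.stdGaussian
  rw [stdGaussian_eq_withDensity d]
  exact map_withDensity_invariant _ _ (reflMap_measurePreserving u) _
    (Finset.measurable_prod _ fun i _ =>
      (measurable_gaussianPDF 0 1).comp (measurable_pi_apply i))
    (fun v => prod_gaussianPDF_eq _ _ (reflMap_sq_sum u v))

lemma integrable_mul_gaussianPDFReal :
    Integrable (fun y : ℝ => y * gaussianPDFReal 0 1 y) := by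
  simp only [gaussianPDFReal, NNReal.coe_one, mul_one, sub_zero]
  have h := (integrable_mul_exp_neg_mul_sq (by norm_num : (0:ℝ) < 1/2)).const_mul (√(2*π))⁻¹
  refine h.congr (ae_of_all _ fun y => ?_)
  show (√(2*π))⁻¹ * (y * rexp (-(1/2) * y ^ 2)) = y * ((√(2*π))⁻¹ * rexp (-y ^ 2 / 2))
  rw [show -(1/2) * y ^ 2 = -y ^ 2 / 2 by ring]
  ring

lemma integrable_eval_stdGaussian {d : ℕ} (i : Fin d) :
    Integrable (fun ω : Fin d → ℝ => ω i) (stdGaussian d) := by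
  classical
  unfold _root_.stdGaussian
  rw [stdGaussian_eq_withDensity d]
  have hG : Measurable fun v : Fin d → ℝ => ∏ j, gaussianPDF 0 1 (v j) :=
    Finset.measurable_prod _ fun j _ => (measurable_gaussianPDF 0 1).comp (measurable_pi_apply j)
  rw [integrable_withDensity_iff hG (ae_of_all _ fun v => ENNReal.prod_lt_top
    (fun j _ => by simp [ProbabilityTheory.gaussianPDF]))]
  have htr : ∀ v : Fin d → ℝ, ((∏ j, gaussianPDF 0 1 (v j)).toReal)
      = ∏ j, gaussianPDFReal 0 1 (v j) := by
    intro v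
    rw [ENNReal.toReal_prod]
    exact Finset.prod_congr rfl fun j _ =>
      ENNReal.toReal_ofReal (gaussianPDFReal_nonneg 0 1 (v j))
  have heq : (fun v : Fin d → ℝ => v i * (∏ j, gaussianPDF 0 1 (v j)).toReal)
      = fun v => ∏ j, (fun j' => fun y : ℝ =>
          if j' = i then y * gaussianPDFReal 0 1 y else gaussianPDFReal 0 1 y) j (v j) := by
    funext v
    rw [htr v, ← Finset.mul_prod_erase Finset.univ _ (Finset.mem_univ i),
      ← Finset.mul_prod_erase Finset.univ
        (fun j => (fun j' => fun y : ℝ => if j' = i then y * gaussianPDFReal 0 1 y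
          else gaussianPDFReal 0 1 y) j (v j)) (Finset.mem_univ i)]
    simp only [if_true, eq_self_iff_true]
    rw [← mul_assoc]
    congr 1
    exact (Finset.prod_congr rfl fun j hj =>
      by rw [if_neg (Finset.ne_of_mem_erase hj)]).symm
  rw [heq]
  refine Integrable.fintype_prod (E := ℝ)
    (f := fun j' => fun y : ℝ =>
      if j' = i then y * gaussianPDFReal 0 1 y else gaussianPDFReal 0 1 y) fun j => ?_
  by_cases hji : j = i
  · simpa [hji] using integrable_mul_gaussianPDFReal
  · simpa [hji] using integrable_gaussianPDFReal 0 1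

end AuxLemmas

/-- The restricted Gaussian mean `E[n · 1{n ∈ V ℓ}]` over the Voronoi-type region of
template `ℓ` lies in the span of the templates `x 0, ..., x (L-1)`. -/
theorem voronoi_mean_mem_span {d L : ℕ} (x : Fin L → Fin d → ℝ) (ℓ : Fin L) :
    (fun i => ∫ ω, ω i *
        Set.indicator {v : Fin d → ℝ | ∀ k, k ≠ ℓ → (∑ j, v j * x k j) ≤ ∑ j, v j * x ℓ j}
          (fun _ => (1 : ℝ)) ω ∂stdGaussian d)
      ∈ Submodule.span ℝ (Set.range x) := by
  classical
  set V : Set (Fin d → ℝ) :=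
    {v : Fin d → ℝ | ∀ k, k ≠ ℓ → (∑ j, v j * x k j) ≤ ∑ j, v j * x ℓ j} with hV
  have hVmeas : MeasurableSet V := by
    have : V = ⋂ k, {v : Fin d → ℝ | k ≠ ℓ → (∑ j, v j * x k j) ≤ ∑ j, v j * x ℓ j} := by
      ext v; simp [hV, Set.mem_iInter]
    rw [this]
    refine MeasurableSet.iInter fun k => ?_
    by_cases hk : k = ℓ
    · simp [hk]
    · have : {v : Fin d → ℝ | k ≠ ℓ → (∑ j, v j * x k j) ≤ ∑ j, v j * x ℓ j}
          = {v : Fin d → ℝ | (∑ j, v j * x k j) ≤ ∑ j, v j * x ℓ j} := by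
        ext v; simp [hk]
      rw [this]
      exact measurableSet_le
        (Finset.measurable_sum _ fun j _ => (measurable_pi_apply j).mul_const _)
        (Finset.measurable_sum _ fun j _ => (measurable_pi_apply j).mul_const _)
  set m : Fin d → ℝ :=
    fun i => ∫ ω, ω i * V.indicator (fun _ => (1 : ℝ)) ω ∂stdGaussian d with hm
  have hind_meas : Measurable (V.indicator (fun _ => (1 : ℝ))) :=
    measurable_const.indicator hVmeas
  have hInt : ∀ i, Integrable (fun ω => ω i * V.indicator (fun _ => (1 : ℝ)) ω)
      (stdGaussian d) := by
    intro i
    refine Integrable.mono' (integrable_eval_stdGaussian i).abs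
      (((measurable_pi_apply i).mul hind_meas).aestronglyMeasurable)
      (ae_of_all _ fun ω => ?_)
    rw [Real.norm_eq_abs, abs_mul]
    refine mul_le_of_le_one_right (abs_nonneg _) ?_
    by_cases hω : ω ∈ V <;> simp [hω]
  have key : ∀ u : EuclideanSpace ℝ (Fin d), u ≠ 0 → (∀ k, ∑ j, u j * x k j = 0) →
      ∑ j, u j * m j = 0 := by
    intro u hu0 hu
    set q : ℝ := ∑ j, u j * u j with hq
    obtain ⟨i0, hi0⟩ : ∃ i, u i ≠ 0 := by
      by_contra hc
      push_neg at hc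
      exact hu0 (PiLp.ext hc)
    have hqpos : 0 < q := by
      have hq' : q = ∑ j, (u j) ^ 2 := by simp [hq, sq]
      rw [hq']
      exact Finset.sum_pos' (fun j _ => sq_nonneg _)
        ⟨i0, Finset.mem_univ i0, by positivity⟩
    have hMP := reflMap_measurePreserving_stdGaussian u
    have hindR : ∀ v, V.indicator (fun _ => (1 : ℝ)) (reflMap u v)
        = V.indicator (fun _ => (1 : ℝ)) v := by
      intro v
      have hsum : ∀ k, ∑ j, (reflMap u v) j * x k j = ∑ j, v j * x k j := by
        intro k
        simp only [reflMap_apply]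
        have hterm : ∀ j, (v j - 2 * (∑ j', u j' * v j') / q * u j) * x k j
            = v j * x k j - 2 * (∑ j', u j' * v j') / q * (u j * x k j) := fun j => by ring
        simp_rw [← hq, hterm]
        rw [Finset.sum_sub_distrib, ← Finset.mul_sum, hu k, mul_zero, sub_zero]
      have hmem : reflMap u v ∈ V ↔ v ∈ V := by
        simp only [hV, Set.mem_setOf_eq]
        constructor
        · intro h k hk
          have := h k hk
          rwa [hsum, hsum] at this
        · intro h k hk
          rw [hsum, hsum]
          exact h k hk
      by_cases hv : v ∈ V
      · rw [Set.indicator_of_mem hv, Set.indicator_of_mem (hmem.2 hv)]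
      · rw [Set.indicator_of_notMem hv,
          Set.indicator_of_notMem (fun hc => hv (hmem.1 hc))]
    have hci : ∀ i : Fin d, m i = m i - 2 * u i / q * (∑ j, u j * m j) := by
      intro i
      have h0 : ∫ ω, (fun ω' => ω' i * V.indicator (fun _ => (1 : ℝ)) ω') (reflMap u ω)
          ∂stdGaussian d = m i :=
        hMP.integral_comp (reflMap u).measurableEmbedding
          (fun ω' => ω' i * V.indicator (fun _ => (1 : ℝ)) ω')
      have h1 : ∀ ω : Fin d → ℝ,
          (fun ω' => ω' i * V.indicator (fun _ => (1 : ℝ)) ω') (reflMap u ω)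
          = ω i * V.indicator (fun _ => (1 : ℝ)) ω
            - 2 * u i / q * ∑ j, u j * (ω j * V.indicator (fun _ => (1 : ℝ)) ω) := by
        intro ω
        have hs : ∑ j, u j * (ω j * V.indicator (fun _ => (1 : ℝ)) ω)
            = (∑ j, u j * ω j) * V.indicator (fun _ => (1 : ℝ)) ω := by
          rw [Finset.sum_mul]
          exact Finset.sum_congr rfl fun j _ => by ring
        show (reflMap u ω) i * V.indicator (fun _ => (1 : ℝ)) (reflMap u ω) = _
        rw [hindR, reflMap_apply, hs, ← hq]
        ring
      have hInt2 : Integrable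
          (fun ω => ∑ j, u j * (ω j * V.indicator (fun _ => (1 : ℝ)) ω)) (stdGaussian d) :=
        integrable_finset_sum _ fun j _ => (hInt j).const_mul (u j)
      conv_lhs => rw [← h0]
      calc ∫ ω, (fun ω' => ω' i * V.indicator (fun _ => (1 : ℝ)) ω') (reflMap u ω) ∂stdGaussian d
          = ∫ ω, (ω i * V.indicator (fun _ => (1 : ℝ)) ω
            - 2 * u i / q * ∑ j, u j * (ω j * V.indicator (fun _ => (1 : ℝ)) ω))
              ∂stdGaussian d := by
            exact integral_congr_ae (Filter.EventuallyEq.of_eq (funext h1))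
        _ = m i - 2 * u i / q * (∑ j, u j * m j) := by
            rw [integral_sub (hInt i) (hInt2.const_mul _), integral_const_mul,
              integral_finset_sum _ (fun j _ => (hInt j).const_mul (u j))]
            simp_rw [integral_const_mul]
            rfl
    have h2 := hci i0
    have h3 : 2 * u i0 / q * (∑ j, u j * m j) = 0 := by linarith
    rcases mul_eq_zero.1 h3 with h4 | h4
    · exact absurd h4 (div_ne_zero (mul_ne_zero two_ne_zero hi0) hqpos.ne')
    · exact h4
  -- conclude via double orthogonal complement in EuclideanSpace
  set e := WithLp.linearEquiv 2 ℝ (Fin d → ℝ) with he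
  set S' : Submodule ℝ (EuclideanSpace ℝ (Fin d)) :=
    Submodule.span ℝ (Set.range fun k => e.symm (x k)) with hS'
  have hm' : e.symm m ∈ S'ᗮᗮ := by
    rw [Submodule.mem_orthogonal]
    intro u huS
    by_cases hu0 : u = 0
    · simp [hu0]
    · have hxk : ∀ k, (∑ j, u j * x k j) = 0 := by
        intro k
        have h1 : (inner ℝ (e.symm (x k)) u : ℝ) = 0 :=
          huS _ (Submodule.subset_span ⟨k, rfl⟩)
        rw [← h1]
        simp [he, PiLp.inner_apply, RCLike.inner_apply, conj_trivial, mul_comm,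
          WithLp.linearEquiv_symm_apply, PiLp.toLp_apply]
      have h2 := key u hu0 hxk
      rw [show (inner ℝ u (e.symm m) : ℝ) = ∑ j, u j * m j from by
        simp [he, PiLp.inner_apply, RCLike.inner_apply, conj_trivial, mul_comm,
          WithLp.linearEquiv_symm_apply, PiLp.toLp_apply]]
      exact h2
  rw [Submodule.orthogonal_orthogonal] at hm'
  have hmap : m ∈ Submodule.map e.toLinearMap S' := ⟨e.symm m, hm', by simp⟩
  rw [hS', Submodule.map_span] at hmap
  have himg : e.toLinearMap '' (Set.range fun k => e.symm (x k)) = Set.range x := by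
    rw [← Set.range_comp]
    exact congrArg Set.range (funext fun k => by simp)
  rwa [himg] at hmap
end

section
/- (Bernstein's law of large numbers) Let Y_1, Y_2, ... be a sequence of random variables with common finite mean μ, uniformly bounded variances Var(Y_j) ≤ K < ∞, and Cov(Y_i, Y_j) → 0 as |i − j| → ∞. Then (1/n) Σ_{i=1}^n Y_i converges to μ in probability as n → ∞. -/
open MeasureTheory Filter Topology

/-- Bernstein's law of large numbers: a sequence of square-integrable random variables with
common mean `m`, uniformly bounded variances and covariances tending to zero as `|i - j| → ∞`
satisfies the weak law of large numbers (convergence in probability of the sample mean). -/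
theorem bernstein_lln {Ω : Type*} [MeasurableSpace Ω] (μ : Measure Ω) [IsProbabilityMeasure μ]
    (Y : ℕ → Ω → ℝ) (m K : ℝ)
    (hmeas : ∀ j, Measurable (Y j))
    (hL2 : ∀ j, MemLp (Y j) 2 μ)
    (hmean : ∀ j, ∫ ω, Y j ω ∂μ = m)
    (hvar : ∀ j, ∫ ω, (Y j ω - m) ^ 2 ∂μ ≤ K)
    (hcov : ∀ ε > 0, ∃ N : ℕ, ∀ i j : ℕ, N ≤ ((i : ℤ) - (j : ℤ)).natAbs →
      |∫ ω, (Y i ω - m) * (Y j ω - m) ∂μ| < ε) :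
    TendstoInMeasure μ
      (fun (n : ℕ) ω => (n : ℝ)⁻¹ * ∑ i ∈ Finset.range n, Y (i + 1) ω) atTop
      (fun _ => m) := by
  classical
  set X : ℕ → Ω → ℝ := fun j ω => Y j ω - m with hXdef
  have hK0 : 0 ≤ K := le_trans (integral_nonneg fun ω => sq_nonneg _) (hvar 0)
  have hXL2 : ∀ j, MemLp (X j) 2 μ := fun j => (hL2 j).sub (memLp_const m)
  have hXsq_int : ∀ j, Integrable (fun ω => X j ω ^ 2) μ := fun j => (hXL2 j).integrable_sq
  have habs_le : ∀ i j, ∀ ω : Ω, |X i ω * X j ω| ≤ (X i ω ^ 2 + X j ω ^ 2) / 2 := by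
    intro i j ω
    have key : ∀ a b : ℝ, |a * b| ≤ (a ^ 2 + b ^ 2) / 2 := by
      intro a b
      rw [abs_mul]
      have h := two_mul_le_add_sq |a| |b|
      rw [sq_abs, sq_abs] at h
      linarith
    exact key _ _
  have hmul_int : ∀ i j, Integrable (fun ω => X i ω * X j ω) μ := by
    intro i j
    refine Integrable.mono' (((hXsq_int i).add (hXsq_int j)).div_const 2) ?_
      (Filter.Eventually.of_forall fun ω => ?_)
    · exact (((hmeas i).sub measurable_const).mul
        ((hmeas j).sub measurable_const)).aestronglyMeasurable
    · simpa [Real.norm_eq_abs, abs_mul] using habs_le i j ω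
  set c : ℕ → ℕ → ℝ := fun i j => ∫ ω, X i ω * X j ω ∂μ with hcdef
  have hcK : ∀ i j, |c i j| ≤ K := by
    intro i j
    calc |c i j| ≤ ∫ ω, |X i ω * X j ω| ∂μ := by
          have h := norm_integral_le_integral_norm (μ := μ) (fun ω => X i ω * X j ω)
          simp only [Real.norm_eq_abs] at h
          exact h
      _ ≤ ∫ ω, (X i ω ^ 2 + X j ω ^ 2) / 2 ∂μ :=
          integral_mono (hmul_int i j).abs (((hXsq_int i).add (hXsq_int j)).div_const 2)
            (habs_le i j)
      _ = ((∫ ω, X i ω ^ 2 ∂μ) + ∫ ω, X j ω ^ 2 ∂μ) / 2 := by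
          rw [integral_div, integral_add (hXsq_int i) (hXsq_int j)]
      _ ≤ (K + K) / 2 := by
          have := hvar i; have := hvar j
          simp only [hXdef] at *
          linarith
      _ = K := by ring
  have hYint : ∀ j, Integrable (Y j) μ := fun j => (hL2 j).integrable one_le_two
  set Z : ℕ → Ω → ℝ := fun n ω => (n : ℝ)⁻¹ * ∑ i ∈ Finset.range n, Y (i + 1) ω with hZdef
  have hZL2 : ∀ n, MemLp (Z n) 2 μ := by
    intro n
    have h := (memLp_finset_sum' (Finset.range n) fun i _ => hL2 (i + 1)).const_mul ((n : ℝ)⁻¹)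
    simpa only [Finset.sum_apply] using h
  have hZmean : ∀ n : ℕ, 1 ≤ n → ∫ ω, Z n ω ∂μ = m := by
    intro n hn
    have hn' : (n : ℝ) ≠ 0 := Nat.cast_ne_zero.mpr (by omega)
    have : ∫ ω, Z n ω ∂μ
        = (n : ℝ)⁻¹ * ∑ i ∈ Finset.range n, ∫ ω, Y (i + 1) ω ∂μ := by
      simp only [hZdef]
      rw [integral_const_mul, integral_finset_sum _ fun i _ => hYint (i + 1)]
    rw [this]
    simp only [hmean, Finset.sum_const, Finset.card_range, nsmul_eq_mul]
    field_simp
  have hZsub : ∀ n : ℕ, 1 ≤ n → ∀ ω, Z n ω - m = (n : ℝ)⁻¹ * ∑ i ∈ Finset.range n, X (i + 1) ω := by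
    intro n hn ω
    have hn' : (n : ℝ) ≠ 0 := Nat.cast_ne_zero.mpr (by omega)
    simp only [hZdef, hXdef, Finset.sum_sub_distrib, Finset.sum_const, Finset.card_range,
      nsmul_eq_mul]
    field_simp
  have hvarZ : ∀ n : ℕ, 1 ≤ n → ProbabilityTheory.variance (Z n) μ
      = ((n : ℝ)⁻¹) ^ 2 * ∑ i ∈ Finset.range n, ∑ j ∈ Finset.range n, c (i + 1) (j + 1) := by
    intro n hn
    have h1 : ProbabilityTheory.variance (Z n) μ = ∫ ω, (Z n ω - m) ^ 2 ∂μ := by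
      rw [ProbabilityTheory.variance_eq_integral (hZL2 n).aemeasurable]
      congr 1 with ω
      simp [hZmean n hn]
    have h2 : ∀ ω, (Z n ω - m) ^ 2
        = ((n : ℝ)⁻¹) ^ 2 * ∑ i ∈ Finset.range n, ∑ j ∈ Finset.range n,
            X (i + 1) ω * X (j + 1) ω := by
      intro ω
      rw [hZsub n hn ω, mul_pow, sq (∑ i ∈ Finset.range n, X (i + 1) ω),
        Finset.sum_mul_sum]
    rw [h1]
    simp_rw [h2]
    rw [integral_const_mul, integral_finset_sum _ fun i _ =>
      integrable_finset_sum _ fun j _ => hmul_int (i + 1) (j + 1)]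
    congr 1
    refine Finset.sum_congr rfl fun i _ => ?_
    rw [integral_finset_sum _ fun j _ => hmul_int (i + 1) (j + 1)]
  have hVtend : Tendsto (fun n => ProbabilityTheory.variance (Z n) μ) atTop (𝓝 0) := by
    rw [Metric.tendsto_atTop]
    intro ε hε
    obtain ⟨N, hN⟩ := hcov (ε / 2) (by positivity)
    refine ⟨max 1 (⌊4 * N * K / ε⌋₊ + 1), fun n hn => ?_⟩
    have hn1 : 1 ≤ n := le_trans (le_max_left _ _) hn
    have hnn : (n : ℝ) ≠ 0 := Nat.cast_ne_zero.mpr (by omega)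
    have hn1' : (1 : ℝ) ≤ (n : ℝ) := by exact_mod_cast hn1
    have hnbig : 4 * N * K / ε < (n : ℝ) := by
      have : (⌊4 * N * K / ε⌋₊ + 1 : ℕ) ≤ n := le_trans (le_max_right _ _) hn
      have h2 : ((⌊4 * N * K / ε⌋₊ + 1 : ℕ) : ℝ) ≤ (n : ℝ) := by exact_mod_cast this
      calc 4 * N * K / ε < ⌊4 * N * K / ε⌋₊ + 1 := Nat.lt_floor_add_one _
        _ ≤ (n : ℝ) := by push_cast at h2 ⊢; linarith
    -- inner bound
    have hinner : ∀ i ∈ Finset.range n,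
        ∑ j ∈ Finset.range n, |c (i + 1) (j + 1)| ≤ n * (ε / 2) + K * (2 * N) := by
      intro i _
      have step1 : ∑ j ∈ Finset.range n, |c (i + 1) (j + 1)|
          ≤ ∑ j ∈ Finset.range n,
            (ε / 2 + if ((i : ℤ) - (j : ℤ)).natAbs < N then K else 0) := by
        refine Finset.sum_le_sum fun j _ => ?_
        by_cases h : ((i : ℤ) - (j : ℤ)).natAbs < N
        · simp only [h, if_true]
          linarith [hcK (i + 1) (j + 1), hε]
        · simp only [h, if_false]
          have hge : N ≤ (((i + 1 : ℕ) : ℤ) - ((j + 1 : ℕ) : ℤ)).natAbs := by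
            push_cast
            omega
          have := hN (i + 1) (j + 1) hge
          simp only [hcdef, hXdef, add_zero]
          exact le_of_lt (by simpa using this)
      have step2 : ∑ j ∈ Finset.range n,
          (ε / 2 + if ((i : ℤ) - (j : ℤ)).natAbs < N then K else 0)
          = n * (ε / 2) + K * ((Finset.range n).filter
              (fun j : ℕ => ((i : ℤ) - (j : ℤ)).natAbs < N)).card := by
        rw [Finset.sum_add_distrib, Finset.sum_const, Finset.card_range, nsmul_eq_mul]
        congr 1
        rw [← Finset.sum_filter, Finset.sum_const, nsmul_eq_mul, mul_comm]
      have hcard : ((Finset.range n).filter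
          (fun j : ℕ => ((i : ℤ) - (j : ℤ)).natAbs < N)).card ≤ 2 * N := by
        have hsub : (Finset.range n).filter (fun j : ℕ => ((i : ℤ) - (j : ℤ)).natAbs < N)
            ⊆ Finset.Ico (i + 1 - N) (i + N) := by
          intro j hj
          simp only [Finset.mem_filter, Finset.mem_range] at hj
          simp only [Finset.mem_Ico]
          omega
        calc ((Finset.range n).filter (fun j : ℕ => ((i : ℤ) - (j : ℤ)).natAbs < N)).card
            ≤ (Finset.Ico (i + 1 - N) (i + N)).card := Finset.card_le_card hsub
          _ = (i + N) - (i + 1 - N) := Nat.card_Ico _ _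
          _ ≤ 2 * N := by omega
      calc ∑ j ∈ Finset.range n, |c (i + 1) (j + 1)|
          ≤ n * (ε / 2) + K * ((Finset.range n).filter
              (fun j : ℕ => ((i : ℤ) - (j : ℤ)).natAbs < N)).card := by rw [← step2]; exact step1
        _ ≤ n * (ε / 2) + K * (2 * N) := by
            have : (((Finset.range n).filter
                (fun j : ℕ => ((i : ℤ) - (j : ℤ)).natAbs < N)).card : ℝ) ≤ (2 * N : ℕ) := by
              exact_mod_cast hcard
            push_cast at this ⊢
            nlinarith
    have hsum : |∑ i ∈ Finset.range n, ∑ j ∈ Finset.range n, c (i + 1) (j + 1)|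
        ≤ n * (n * (ε / 2) + K * (2 * N)) := by
      calc |∑ i ∈ Finset.range n, ∑ j ∈ Finset.range n, c (i + 1) (j + 1)|
          ≤ ∑ i ∈ Finset.range n, |∑ j ∈ Finset.range n, c (i + 1) (j + 1)| :=
            Finset.abs_sum_le_sum_abs _ _
        _ ≤ ∑ i ∈ Finset.range n, ∑ j ∈ Finset.range n, |c (i + 1) (j + 1)| :=
            Finset.sum_le_sum fun i _ => Finset.abs_sum_le_sum_abs _ _
        _ ≤ ∑ i ∈ Finset.range n, (n * (ε / 2) + K * (2 * N)) := Finset.sum_le_sum hinner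
        _ = n * (n * (ε / 2) + K * (2 * N)) := by
            rw [Finset.sum_const, Finset.card_range, nsmul_eq_mul]
    have hvpos : 0 ≤ ProbabilityTheory.variance (Z n) μ := ProbabilityTheory.variance_nonneg _ _
    rw [Real.dist_eq, sub_zero, abs_of_nonneg hvpos]
    rw [hvarZ n hn1]
    have hb : ((n : ℝ)⁻¹) ^ 2 * ∑ i ∈ Finset.range n, ∑ j ∈ Finset.range n, c (i + 1) (j + 1)
        ≤ ((n : ℝ)⁻¹) ^ 2 * (n * (n * (ε / 2) + K * (2 * N))) := by
      have h1 : (0 : ℝ) ≤ ((n : ℝ)⁻¹) ^ 2 := sq_nonneg _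
      have h2 := le_abs_self (∑ i ∈ Finset.range n, ∑ j ∈ Finset.range n, c (i + 1) (j + 1))
      nlinarith
    have heq : ((n : ℝ)⁻¹) ^ 2 * (n * (n * (ε / 2) + K * (2 * N)))
        = ε / 2 + 2 * N * K / n := by
      field_simp
    have hlast : 2 * N * K / (n : ℝ) < ε / 2 := by
      rw [div_lt_iff₀ (by linarith)]
      rw [div_lt_iff₀ hε] at hnbig
      nlinarith
    calc ((n : ℝ)⁻¹) ^ 2 * ∑ i ∈ Finset.range n, ∑ j ∈ Finset.range n, c (i + 1) (j + 1)
        ≤ ε / 2 + 2 * N * K / n := by rw [← heq]; exact hb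
      _ < ε := by linarith
  rw [tendstoInMeasure_iff_dist]
  intro δ hδ
  have hub : ∀ᶠ n in atTop, μ {x | δ ≤ dist (Z n x) m}
      ≤ ENNReal.ofReal (ProbabilityTheory.variance (Z n) μ / δ ^ 2) := by
    filter_upwards [eventually_ge_atTop 1] with n hn
    have h := ProbabilityTheory.meas_ge_le_variance_div_sq (hZL2 n) hδ
    have hm : ∫ ω, Z n ω ∂μ = m := hZmean n hn
    simp only [hm] at h
    simpa [Real.dist_eq] using h
  have hto : Tendsto (fun n => ENNReal.ofReal (ProbabilityTheory.variance (Z n) μ / δ ^ 2))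
      atTop (𝓝 0) := by
    have h0 : Tendsto (fun n => ProbabilityTheory.variance (Z n) μ / δ ^ 2) atTop (𝓝 0) := by
      simpa using hVtend.div_const (δ ^ 2)
    simpa using ENNReal.tendsto_ofReal h0
  exact tendsto_of_tendsto_of_tendsto_of_le_of_le' tendsto_const_nhds hto
    (Eventually.of_forall fun n => zero_le) hub
end
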